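/- For every real t, the product Δ₆(1/2 + it)·D(1/2 + it) is real, i.e. Im(Δ₆(1/2 + it)·D(1/2 + it)) = 0. (Equivalently, on the critical line the phase of Δ₆ is, modulo π, determined by the phase of D.) -/

import Mathlib

open Complex Filter Set Topology

lemma hasDerivAt_conj_conj {g : ℂ → ℂ} {d z : ℂ}
    (h : HasDerivAt g d ((starRingEnd ℂ) z)) :
    HasDerivAt (fun w => (starRingEnd ℂ) (g ((starRingEnd ℂ) w))) ((starRingEnd ℂ) d) z := by
  rw [hasDerivAt_iff_tendsto_slope] at h ⊢
  have hconj : Tendsto (fun w : ℂ => (starRingEnd ℂ) w) (𝓝[≠] z) (𝓝[≠] ((starRingEnd ℂ) z)) := by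
    apply tendsto_nhdsWithin_of_tendsto_nhds_of_eventually_within
    · exact (Complex.continuous_conj.tendsto z).mono_left nhdsWithin_le_nhds
    · filter_upwards [self_mem_nhdsWithin] with w hw
      simp only [mem_compl_iff, mem_singleton_iff] at hw ⊢
      exact fun hc => hw (star_injective (by exact hc))
  have := (Complex.continuous_conj.tendsto d).comp (h.comp hconj)
  refine this.congr' ?_
  filter_upwards [self_mem_nhdsWithin] with w hw
  simp only [Function.comp_apply, slope_def_field]
  simp [map_div₀, map_sub]

open Real in
lemma completedRiemannZeta_ofReal_real {x : ℝ} (hx : 1 < x) :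
    (starRingEnd ℂ) (completedRiemannZeta x) = completedRiemannZeta x := by
  rw [completedZeta_eq_tsum_of_one_lt_re (by simpa using hx)]
  have h1 : ((π : ℂ)) ^ (-(x:ℂ) / 2) = ((π ^ (-x / 2) : ℝ) : ℂ) := by
    rw [Complex.ofReal_cpow pi_pos.le]; push_cast; ring_nf
  have h2 : Complex.Gamma ((x:ℂ)/2) = Complex.Gamma ((((x/2 : ℝ)):ℂ)) := by push_cast; ring_nf
  have h3 : ∀ n : ℕ, (1 : ℂ) / (n : ℂ) ^ (x : ℂ) = (((1 / (n:ℝ) ^ x : ℝ)) : ℂ) := by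
    intro n
    rw [Complex.ofReal_div, Complex.ofReal_one, Complex.ofReal_cpow (Nat.cast_nonneg n)]
    norm_num
  rw [map_mul, map_mul, conj_tsum, h1, h2, Complex.conj_ofReal]
  congr 1
  · rw [← Complex.Gamma_conj, Complex.conj_ofReal]
  · exact tsum_congr fun n => by rw [h3 n, Complex.conj_ofReal]

lemma completedRiemannZeta₀_conj (s : ℂ) :
    completedRiemannZeta₀ ((starRingEnd ℂ) s) = (starRingEnd ℂ) (completedRiemannZeta₀ s) := by
  have hf : Differentiable ℂ (fun w => (starRingEnd ℂ)
      (completedRiemannZeta₀ ((starRingEnd ℂ) w))) := fun z =>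
    (hasDerivAt_conj_conj
      ((differentiable_completedZeta₀ ((starRingEnd ℂ) z)).hasDerivAt)).differentiableAt
  have key : (fun w => (starRingEnd ℂ) (completedRiemannZeta₀ ((starRingEnd ℂ) w)))
      = completedRiemannZeta₀ := by
    apply AnalyticOnNhd.eq_of_frequently_eq (z₀ := (2 : ℂ))
      (analyticOnNhd_univ_iff_differentiable.2 hf)
      (analyticOnNhd_univ_iff_differentiable.2 differentiable_completedZeta₀)
    have htend : Tendsto (fun n : ℕ => ((2 + 1/(n+1) : ℝ) : ℂ)) atTop (𝓝[≠] (2 : ℂ)) := by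
      apply tendsto_nhdsWithin_of_tendsto_nhds_of_eventually_within
      · have : Tendsto (fun n : ℕ => (2 + 1/(n+1) : ℝ)) atTop (𝓝 2) := by
          simpa using tendsto_const_nhds.add
            (tendsto_one_div_add_atTop_nhds_zero_nat (𝕜 := ℝ))
        have h2 := (Complex.continuous_ofReal.tendsto 2).comp this
        have h2c : ((2:ℝ):ℂ) = 2 := by norm_num
        exact h2c ▸ h2
      · filter_upwards with n
        simp only [mem_compl_iff, mem_singleton_iff]
        intro h
        have hx2 : (2 + 1/(n+1) : ℝ) = 2 := by exact_mod_cast h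
        have hpos : (0:ℝ) < 1/(n+1) := by positivity
        linarith
    refine htend.frequently (Frequently.of_forall fun n => ?_)
    set x : ℝ := 2 + 1/(n+1) with hxdef
    have hx : 1 < x := by
      have : (0:ℝ) < 1/(n+1) := by positivity
      simp only [hxdef]; linarith
    have hreal : (starRingEnd ℂ) (completedRiemannZeta₀ (x : ℂ))
        = completedRiemannZeta₀ (x : ℂ) := by
      have hΛ := completedRiemannZeta_ofReal_real hx
      have hdef := completedRiemannZeta_eq (x : ℂ)
      have h1 : (starRingEnd ℂ) (1 / (x:ℂ)) = 1 / (x:ℂ) := by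
        rw [map_div₀, map_one, Complex.conj_ofReal]
      have h2 : (starRingEnd ℂ) (1 / (1 - (x:ℂ))) = 1 / (1 - (x:ℂ)) := by
        rw [map_div₀, map_one, map_sub, map_one, Complex.conj_ofReal]
      have hre : completedRiemannZeta₀ (x:ℂ)
          = completedRiemannZeta (x:ℂ) + 1/(x:ℂ) + 1/(1-(x:ℂ)) := by
        linear_combination -hdef
      rw [hre, map_add, map_add, hΛ, h1, h2]
    simpa [Complex.conj_ofReal] using hreal
  rw [← congrFun key ((starRingEnd ℂ) s), Complex.conj_conj]

lemma completedRiemannZeta_conj (s : ℂ) :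
    completedRiemannZeta ((starRingEnd ℂ) s) = (starRingEnd ℂ) (completedRiemannZeta s) := by
  rw [completedRiemannZeta_eq, completedRiemannZeta_eq, completedRiemannZeta₀_conj,
    map_sub, map_sub, map_div₀, map_div₀, map_one, map_sub, map_one]

noncomputable def D (s : ℂ) : ℂ :=
  ((Real.pi ^ (-(1/4) : ℝ) : ℝ) * Complex.Gamma s +
    (Real.pi ^ ((1/4) : ℝ) : ℝ) * Complex.Gamma (s - 1/2)) / Complex.Gamma (s - 1/4)

noncomputable def Δ₆ (s : ℂ) : ℂ :=
  (completedRiemannZeta (2 * s) + completedRiemannZeta (2 * s - 1)) /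
    (completedRiemannZeta (2 * s - 1/2) * D s)

theorem Delta6_times_D_real_on_critical_line (t : ℝ) :
    (Δ₆ (1/2 + t * Complex.I) * D (1/2 + t * Complex.I)).im = 0 := by
  set s : ℂ := 1/2 + t * Complex.I with hs
  have h1 : (starRingEnd ℂ) (2 * s) = 1 - (2 * s - 1) := by
    simp only [hs, map_mul, map_add, map_ofNat, map_one, map_div₀, Complex.conj_I,
      Complex.conj_ofReal]
    ring
  have h2 : (starRingEnd ℂ) (2 * s - 1/2) = 1 - (2 * s - 1/2) := by
    simp only [hs, map_sub, map_mul, map_add, map_ofNat, map_one, map_div₀, Complex.conj_I,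
      Complex.conj_ofReal]
    ring
  have hb : completedRiemannZeta (2 * s - 1)
      = (starRingEnd ℂ) (completedRiemannZeta (2 * s)) := by
    rw [← completedRiemannZeta_conj, h1, completedRiemannZeta_one_sub]
  have hc : (starRingEnd ℂ) (completedRiemannZeta (2 * s - 1/2))
      = completedRiemannZeta (2 * s - 1/2) := by
    rw [← completedRiemannZeta_conj, h2, completedRiemannZeta_one_sub]
  set X : ℂ := completedRiemannZeta (2 * s) + completedRiemannZeta (2 * s - 1) with hX
  set Y : ℂ := completedRiemannZeta (2 * s - 1/2) with hY
  have hXc : (starRingEnd ℂ) X = X := by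
    rw [hX, map_add, ← hb, hb, Complex.conj_conj, add_comm]
  by_cases hD : D s = 0
  · simp [Δ₆, hD]
  by_cases hYz : Y = 0
  · rw [Δ₆, ← hY, hYz, zero_mul, div_zero, zero_mul, Complex.zero_im]
  have hprod : Δ₆ s * D s = X / Y := by
    rw [Δ₆, ← hX, ← hY]
    field_simp
  rw [hprod]
  have : (starRingEnd ℂ) (X / Y) = X / Y := by rw [map_div₀, hXc, hc]
  exact (Complex.conj_eq_iff_im.mp this)
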